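/- Let σ > 0 and let u : ℝ → (ℕ → ℂ) be a Fourier-side solution of the cubic Szegő equation such that M := sup_{t∈ℝ} ‖u(t)‖_W < ∞ and ‖u(0)‖_{G_σ(W)} < ∞. Then there exist constants λ > 0 and C₀ > 0 (depending only on σ, M and ‖u(0)‖_{G_σ(W)}) such that for all t ∈ ℝ, ‖u(t)‖_{G_{τ(t)}(W)} ≤ C₀, where τ(t) = σ·e^{−λ|t|}. In particular, for analytic initial data the solution remains spatially analytic for all time, with radius of analyticity at least σ·e^{−λ|t|}. -/

import Mathlib

open scoped BigOperators

open MeasureTheory Set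
open scoped ENNReal NNReal


/-- The cubic nonlinearity of the Szegő equation on the Fourier side:
for frequency `k`, the sum of `u(t,n) * conj (u(t,j)) * u(t,m)` over all triples
`(n,j,m) ∈ ℕ³` with `n + m = j + k`. -/
noncomputable def szegoCubic (u : ℝ → ℕ → ℂ) (t : ℝ) (k : ℕ) : ℂ :=
  ∑' p : {p : ℕ × ℕ × ℕ // p.1 + p.2.2 = p.2.1 + k},
    u t p.1.1 * (starRingEnd ℂ) (u t p.1.2.1) * u t p.1.2.2

/-- `u : ℝ → (ℕ → ℂ)` is a Fourier-side solution of the cubic Szegő equation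
`i ∂ₜ u = Π(|u|² u)`: for each `k`, the map `t ↦ u(t,k)` is differentiable with
`i u'(t,k) = ∑_{n+m=j+k} u(t,n) conj(u(t,j)) u(t,m)`, the sum converging absolutely. -/
def IsSzegoSolution (u : ℝ → ℕ → ℂ) : Prop :=
  ∀ t : ℝ, ∀ k : ℕ,
    (Summable fun p : {p : ℕ × ℕ × ℕ // p.1 + p.2.2 = p.2.1 + k} =>
      ‖u t p.1.1 * (starRingEnd ℂ) (u t p.1.2.1) * u t p.1.2.2‖) ∧
    HasDerivAt (fun s : ℝ => u s k) (-Complex.I * szegoCubic u t k) t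

namespace SzegoAux


noncomputable def NN (v : ℝ → ℕ → ℂ) (t : ℝ) (k : ℕ) : ℝ≥0∞ := (‖v t k‖₊ : ℝ≥0∞)

noncomputable def Wsum (v : ℝ → ℕ → ℂ) (t : ℝ) : ℝ≥0∞ := ∑' k, NN v t k

noncomputable def Dq (v : ℝ → ℕ → ℂ) (t : ℝ) (k : ℕ) : ℝ≥0∞ :=
  ∑' p : {p : ℕ × ℕ × ℕ // p.1 + p.2.2 = p.2.1 + k},
    NN v t p.1.1 * NN v t p.1.2.1 * NN v t p.1.2.2

noncomputable def Phi (v : ℝ → ℕ → ℂ) (W : ℕ → ℝ≥0∞) (t : ℝ) : ℝ≥0∞ :=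
  ∑' k, W k * NN v t k

lemma tsum_triple_prod (a b c : ℕ → ℝ≥0∞) :
    ∑' q : ℕ × ℕ × ℕ, a q.1 * b q.2.1 * c q.2.2
      = (∑' n, a n) * (∑' n, b n) * (∑' n, c n) := by
  rw [ENNReal.tsum_prod']
  simp_rw [ENNReal.tsum_prod', mul_assoc, ENNReal.tsum_mul_left, ENNReal.tsum_mul_right]

lemma Dq_le_cube (v : ℝ → ℕ → ℂ) (t : ℝ) (k : ℕ) :
    Dq v t k ≤ Wsum v t * Wsum v t * Wsum v t := by
  have h := ENNReal.tsum_comp_le_tsum_of_injective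
    (f := (Subtype.val : {p : ℕ × ℕ × ℕ // p.1 + p.2.2 = p.2.1 + k} → ℕ × ℕ × ℕ))
    Subtype.val_injective
    (fun q : ℕ × ℕ × ℕ => NN v t q.1 * NN v t q.2.1 * NN v t q.2.2)
  calc Dq v t k ≤ ∑' q : ℕ × ℕ × ℕ, NN v t q.1 * NN v t q.2.1 * NN v t q.2.2 := h
    _ = Wsum v t * Wsum v t * Wsum v t := tsum_triple_prod _ _ _

lemma weighted_cubic_bound (v : ℝ → ℕ → ℂ) (W : ℕ → ℝ≥0∞)
    (hmono : Monotone W)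
    (hsub : ∀ n m : ℕ, W (n + m) ≤ W n + W m + W n * W m) (t : ℝ) :
    ∑' k, W k * Dq v t k ≤
      2 * (Phi v W t * (Wsum v t * Wsum v t)) + Phi v W t * Phi v W t * Wsum v t := by
  classical
  have hjoin : ∑' k, W k * Dq v t k
      = ∑' x : (Σ k : ℕ, {p : ℕ × ℕ × ℕ // p.1 + p.2.2 = p.2.1 + k}),
          W x.1 * (NN v t x.2.1.1 * NN v t x.2.1.2.1 * NN v t x.2.1.2.2) := by
    calc ∑' k, W k * Dq v t k
        = ∑' (k : ℕ) (p : {p : ℕ × ℕ × ℕ // p.1 + p.2.2 = p.2.1 + k}),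
            W k * (NN v t p.1.1 * NN v t p.1.2.1 * NN v t p.1.2.2) := by
          congr 1; funext k
          rw [Dq, ENNReal.tsum_mul_left]
      _ = _ := (ENNReal.tsum_sigma fun k (p : {p : ℕ × ℕ × ℕ // p.1 + p.2.2 = p.2.1 + k}) =>
            W k * (NN v t p.1.1 * NN v t p.1.2.1 * NN v t p.1.2.2)).symm
  set g : ℕ × ℕ × ℕ → ℝ≥0∞ := fun q =>
    (W q.1 + W q.2.2 + W q.1 * W q.2.2) * (NN v t q.1 * NN v t q.2.1 * NN v t q.2.2) with hg
  have hinj : Function.Injective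
      (fun x : (Σ k : ℕ, {p : ℕ × ℕ × ℕ // p.1 + p.2.2 = p.2.1 + k}) => (x.2 : ℕ × ℕ × ℕ)) := by
    rintro ⟨k, ⟨p, hp⟩⟩ ⟨k', ⟨p', hp'⟩⟩ h
    simp only at h
    subst h
    have : k = k' := by omega
    subst this; rfl
  have hpt : ∀ x : (Σ k : ℕ, {p : ℕ × ℕ × ℕ // p.1 + p.2.2 = p.2.1 + k}),
      W x.1 * (NN v t x.2.1.1 * NN v t x.2.1.2.1 * NN v t x.2.1.2.2) ≤ g (x.2 : ℕ × ℕ × ℕ) := by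
    rintro ⟨k, ⟨⟨n, j, m⟩, hp⟩⟩
    simp only at hp
    have hk : k ≤ n + m := by omega
    refine mul_le_mul_left ?_ _
    exact (hmono hk).trans (hsub n m)
  have hle : ∑' k, W k * Dq v t k ≤ ∑' q : ℕ × ℕ × ℕ, g q := by
    rw [hjoin]
    exact (ENNReal.tsum_le_tsum hpt).trans (ENNReal.tsum_comp_le_tsum_of_injective hinj g)
  have hexp : ∑' q : ℕ × ℕ × ℕ, g q =
      Phi v W t * (Wsum v t * Wsum v t)
      + Wsum v t * Wsum v t * Phi v W t
      + Phi v W t * Wsum v t * Phi v W t := by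
    have h0 : ∀ q : ℕ × ℕ × ℕ, g q =
        (W q.1 * NN v t q.1) * NN v t q.2.1 * NN v t q.2.2
        + NN v t q.1 * NN v t q.2.1 * (W q.2.2 * NN v t q.2.2)
        + (W q.1 * NN v t q.1) * NN v t q.2.1 * (W q.2.2 * NN v t q.2.2) := by
      intro q; rw [hg]; ring
    rw [tsum_congr h0, ENNReal.tsum_add, ENNReal.tsum_add,
      tsum_triple_prod (fun n => W n * NN v t n) (NN v t) (NN v t),
      tsum_triple_prod (NN v t) (NN v t) (fun m => W m * NN v t m),
      tsum_triple_prod (fun n => W n * NN v t n) (NN v t) (fun m => W m * NN v t m)]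
    simp only [Phi, Wsum]; ring
  refine hle.trans (le_of_eq (hexp.trans ?_))
  ring



/-- Gevrey weight. -/
noncomputable def wt (b : ℝ) (k : ℕ) : ℝ≥0∞ := ENNReal.ofReal (Real.exp (b * k) - 1)

lemma wt_mono_k {b : ℝ} (hb : 0 ≤ b) : Monotone (wt b) := by
  intro n m h
  apply ENNReal.ofReal_le_ofReal
  have : b * n ≤ b * m := by
    apply mul_le_mul_of_nonneg_left _ hb
    exact_mod_cast h
  linarith [Real.exp_le_exp.mpr this]

lemma wt_mono_b {b b' : ℝ} (h : b ≤ b') (k : ℕ) : wt b k ≤ wt b' k := by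
  apply ENNReal.ofReal_le_ofReal
  have : b * k ≤ b' * k := mul_le_mul_of_nonneg_right h (by positivity)
  linarith [Real.exp_le_exp.mpr this]

lemma one_le_exp_nat {b : ℝ} (hb : 0 ≤ b) (k : ℕ) : 1 ≤ Real.exp (b * k) :=
  Real.one_le_exp (by positivity)

lemma wt_sub {b : ℝ} (hb : 0 ≤ b) (n m : ℕ) :
    wt b (n + m) = wt b n + wt b m + wt b n * wt b m := by
  have hn : (0:ℝ) ≤ Real.exp (b * n) - 1 := by linarith [one_le_exp_nat hb n]
  have hm : (0:ℝ) ≤ Real.exp (b * m) - 1 := by linarith [one_le_exp_nat hb m]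
  have key : Real.exp (b * (n + m : ℕ)) - 1
      = (Real.exp (b * n) - 1) + (Real.exp (b * m) - 1)
        + (Real.exp (b * n) - 1) * (Real.exp (b * m) - 1) := by
    push_cast
    rw [mul_add, Real.exp_add]
    ring
  rw [wt, key, ENNReal.ofReal_add (by linarith) (by positivity),
    ENNReal.ofReal_add hn hm, ENNReal.ofReal_mul hn]
  rfl

lemma wt_contract {b θ : ℝ} (hb : 0 ≤ b) (hθ0 : 0 ≤ θ) (hθ1 : θ ≤ 1) (k : ℕ) :
    wt (θ * b) k ≤ ENNReal.ofReal θ * wt b k := by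
  have hconv := convexOn_exp.2 (Set.mem_univ (0:ℝ)) (Set.mem_univ (b * k))
    (by linarith : (0:ℝ) ≤ 1 - θ) hθ0 (by ring)
  simp only [smul_eq_mul, mul_zero, Real.exp_zero, mul_one] at hconv
  have : Real.exp (θ * b * k) - 1 ≤ θ * (Real.exp (b * k) - 1) := by
    have : Real.exp (θ * (b * k)) ≤ 1 - θ + θ * Real.exp (b * k) := by
      simpa using hconv
    calc Real.exp (θ * b * k) - 1 = Real.exp (θ * (b * k)) - 1 := by ring_nf
      _ ≤ (1 - θ + θ * Real.exp (b * k)) - 1 := by linarith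
      _ = θ * (Real.exp (b * k) - 1) := by ring
  calc wt (θ * b) k ≤ ENNReal.ofReal (θ * (Real.exp (b * k) - 1)) :=
        ENNReal.ofReal_le_ofReal this
    _ = ENNReal.ofReal θ * wt b k := ENNReal.ofReal_mul hθ0

lemma trunc_sub {x y z R : ℝ≥0∞} (h : z ≤ x + y + x * y) :
    min z R ≤ min x R + min y R + min x R * min y R := by
  rcases le_total x R with hx | hx
  · rcases le_total y R with hy | hy
    · rw [min_eq_left hx, min_eq_left hy]
      exact le_trans (min_le_left _ _) h
    · rw [min_eq_right hy]
      calc min z R ≤ R := min_le_right _ _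
        _ ≤ min x R + R + min x R * R := by
            exact le_add_of_le_of_nonneg (le_add_self) zero_le
  · rw [min_eq_right hx]
    calc min z R ≤ R := min_le_right _ _
      _ ≤ R + min y R + R * min y R := le_add_of_le_of_nonneg (le_add_of_le_of_nonneg le_rfl zero_le) zero_le

section meas

variable {v : ℝ → ℕ → ℂ}
variable (hcont : ∀ n, Continuous fun s => v s n)
variable (hsum : ∀ t k, Summable fun p : {p : ℕ × ℕ × ℕ // p.1 + p.2.2 = p.2.1 + k} =>
  ‖v t p.1.1 * (starRingEnd ℂ) (v t p.1.2.1) * v t p.1.2.2‖)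

include hcont

lemma measurable_NN (n : ℕ) : Measurable fun s => NN v s n :=
  measurable_coe_nnreal_ennreal.comp (hcont n).measurable.nnnorm

lemma measurable_Dq (k : ℕ) : Measurable fun s => Dq v s k := by
  apply Measurable.ennreal_tsum
  intro p
  exact ((measurable_NN hcont _).mul (measurable_NN hcont _)).mul (measurable_NN hcont _)

include hsum

lemma measurable_cubic (k : ℕ) : Measurable fun s => szegoCubic v s k := by
  apply measurable_of_tendsto_metrizable'
    (u := (Filter.atTop : Filter (Finset {p : ℕ × ℕ × ℕ // p.1 + p.2.2 = p.2.1 + k})))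
    (f := fun S s => ∑ p ∈ S, v s p.1.1 * (starRingEnd ℂ) (v s p.1.2.1) * v s p.1.2.2)
  · intro S
    apply Finset.measurable_sum
    intro p _
    exact (((hcont _).mul ((Complex.continuous_conj).comp (hcont _))).mul (hcont _)).measurable
  · rw [tendsto_pi_nhds]
    intro s
    exact ((hsum s k).of_norm).hasSum

omit hcont in
lemma ofReal_cubic_le_Dq (t : ℝ) (k : ℕ) :
    ENNReal.ofReal ‖szegoCubic v t k‖ ≤ Dq v t k := by
  have h1 : ‖szegoCubic v t k‖ ≤ ∑' p : {p : ℕ × ℕ × ℕ // p.1 + p.2.2 = p.2.1 + k},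
      ‖v t p.1.1 * (starRingEnd ℂ) (v t p.1.2.1) * v t p.1.2.2‖ :=
    norm_tsum_le_tsum_norm (hsum t k)
  have h2 : ENNReal.ofReal (∑' p : {p : ℕ × ℕ × ℕ // p.1 + p.2.2 = p.2.1 + k},
      ‖v t p.1.1 * (starRingEnd ℂ) (v t p.1.2.1) * v t p.1.2.2‖) = Dq v t k := by
    rw [ENNReal.ofReal_tsum_of_nonneg (fun p => norm_nonneg _) (hsum t k)]
    apply tsum_congr
    intro p
    rw [norm_mul, norm_mul, ENNReal.ofReal_mul (by positivity),
      ENNReal.ofReal_mul (norm_nonneg _)]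
    simp only [NN, ofReal_norm, enorm_eq_nnnorm, starRingEnd_apply, norm_star]
  exact h2 ▸ ENNReal.ofReal_le_ofReal h1

end meas


section ftc

variable {v : ℝ → ℕ → ℂ} {c : ℂ} {M₁ : ℝ}
variable (hc1 : ‖c‖ = 1)
variable (hder : ∀ t k, HasDerivAt (fun s => v s k) (c * szegoCubic v t k) t)
variable (hsum : ∀ t k, Summable fun p : {p : ℕ × ℕ × ℕ // p.1 + p.2.2 = p.2.1 + k} =>
  ‖v t p.1.1 * (starRingEnd ℂ) (v t p.1.2.1) * v t p.1.2.2‖)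
variable (hM : ∀ t, Wsum v t ≤ ENNReal.ofReal M₁)
variable (hM1 : 1 ≤ M₁)

include hder in
lemma cont_of_der : ∀ n, Continuous fun s => v s n := fun n =>
  continuous_iff_continuousAt.mpr fun t => (hder t n).continuousAt

include hsum hM hM1 in
lemma cubic_norm_le (t : ℝ) (k : ℕ) : ‖szegoCubic v t k‖ ≤ M₁ ^ 3 := by
  have h0 : (0:ℝ) ≤ M₁ := by linarith
  have h1 : ENNReal.ofReal ‖szegoCubic v t k‖ ≤ ENNReal.ofReal (M₁ ^ 3) := by
    refine (ofReal_cubic_le_Dq hsum t k).trans ((Dq_le_cube v t k).trans ?_)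
    calc Wsum v t * Wsum v t * Wsum v t
        ≤ ENNReal.ofReal M₁ * ENNReal.ofReal M₁ * ENNReal.ofReal M₁ :=
          mul_le_mul' (mul_le_mul' (hM t) (hM t)) (hM t)
      _ = ENNReal.ofReal (M₁ ^ 3) := by
          rw [← ENNReal.ofReal_mul h0, ← ENNReal.ofReal_mul (by positivity)]
          ring_nf
  exact (ENNReal.ofReal_le_ofReal_iff (by positivity)).mp h1

include hc1 hder hsum hM hM1 in
lemma mode_bound {a t : ℝ} (hat : a ≤ t) (k : ℕ) :
    NN v t k ≤ NN v a k + ∫⁻ s in Ioc a t, Dq v s k := by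
  have hcont := cont_of_der hder
  have hmeas := measurable_cubic hcont hsum k
  have hii : IntervalIntegrable (fun s => c * szegoCubic v s k) volume a t := by
    apply (intervalIntegrable_const (c := M₁ ^ 3)).mono_fun
    · exact (measurable_const.mul hmeas).aestronglyMeasurable
    · apply Filter.Eventually.of_forall
      intro s
      simp only [norm_mul, hc1, one_mul, Real.norm_eq_abs, abs_of_nonneg (by positivity : (0:ℝ) ≤ M₁ ^ 3)]
      exact cubic_norm_le hsum hM hM1 s k
  have heq := intervalIntegral.integral_eq_sub_of_hasDerivAt (fun x _ => hder x k) hii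
  have h7 : (∫ s in a..t, ‖c * szegoCubic v s k‖) = ∫ s in a..t, ‖szegoCubic v s k‖ := by
    apply intervalIntegral.integral_congr
    intro s _
    simp only [norm_mul, hc1, one_mul]
  have h3 : ‖v t k‖ ≤ ‖v a k‖ + ∫ s in a..t, ‖szegoCubic v s k‖ := by
    have h4 : ‖v t k‖ - ‖v a k‖ ≤ ‖v t k - v a k‖ := norm_sub_norm_le _ _
    have h5 : ‖v t k - v a k‖ = ‖∫ s in a..t, c * szegoCubic v s k‖ := by rw [heq]
    have h6 : ‖∫ s in a..t, c * szegoCubic v s k‖ ≤ ∫ s in a..t, ‖c * szegoCubic v s k‖ :=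
      intervalIntegral.norm_integral_le_integral_norm hat
    rw [h7] at h6
    linarith
  have hInorm : IntegrableOn (fun s => ‖szegoCubic v s k‖) (Ioc a t) volume := by
    refine (hii.1.norm).congr (Filter.Eventually.of_forall fun s => ?_)
    simp only [norm_mul, hc1, one_mul]
  have h8 : ENNReal.ofReal (∫ s in a..t, ‖szegoCubic v s k‖)
      = ∫⁻ s in Ioc a t, ENNReal.ofReal ‖szegoCubic v s k‖ := by
    rw [intervalIntegral.integral_of_le hat]
    exact ofReal_integral_eq_lintegral_ofReal hInorm
      (Filter.Eventually.of_forall fun s => norm_nonneg _)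
  calc NN v t k = ENNReal.ofReal ‖v t k‖ := (ofReal_norm _).symm
    _ ≤ ENNReal.ofReal (‖v a k‖ + ∫ s in a..t, ‖szegoCubic v s k‖) :=
        ENNReal.ofReal_le_ofReal h3
    _ ≤ ENNReal.ofReal ‖v a k‖ + ENNReal.ofReal (∫ s in a..t, ‖szegoCubic v s k‖) :=
        ENNReal.ofReal_add_le
    _ = NN v a k + ∫⁻ s in Ioc a t, ENNReal.ofReal ‖szegoCubic v s k‖ := by
        rw [h8, ofReal_norm, enorm_eq_nnnorm]; rfl
    _ ≤ NN v a k + ∫⁻ s in Ioc a t, Dq v s k := by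
        gcongr with s
        exact ofReal_cubic_le_Dq hsum s k

include hc1 hder hsum hM hM1 in
lemma Phi_int_ineq (W : ℕ → ℝ≥0∞) (hWtop : ∀ k, W k ≠ ∞) {a t : ℝ} (hat : a ≤ t) :
    Phi v W t ≤ Phi v W a + ∫⁻ s in Ioc a t, (∑' k, W k * Dq v s k) := by
  have hcont := cont_of_der hder
  have h1 : Phi v W t ≤ ∑' k, (W k * NN v a k + W k * ∫⁻ s in Ioc a t, Dq v s k) := by
    apply ENNReal.tsum_le_tsum
    intro k
    rw [← mul_add]
    exact mul_le_mul_right (mode_bound hc1 hder hsum hM hM1 hat k) _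
  rw [ENNReal.tsum_add] at h1
  refine h1.trans (add_le_add_right (le_of_eq ?_) _)
  have h2 : ∀ k : ℕ, W k * ∫⁻ s in Ioc a t, Dq v s k
      = ∫⁻ s in Ioc a t, W k * Dq v s k := fun k =>
    (lintegral_const_mul' (W k) _ (hWtop k)).symm
  rw [tsum_congr h2]
  exact (lintegral_tsum fun k =>
    ((measurable_Dq hcont k).const_mul (W k)).aemeasurable).symm

end ftc

section interval

variable {v : ℝ → ℕ → ℂ} {c : ℂ} {M₁ : ℝ}
variable (hc1 : ‖c‖ = 1)
variable (hder : ∀ t k, HasDerivAt (fun s => v s k) (c * szegoCubic v t k) t)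
variable (hsum : ∀ t k, Summable fun p : {p : ℕ × ℕ × ℕ // p.1 + p.2.2 = p.2.1 + k} =>
  ‖v t p.1.1 * (starRingEnd ℂ) (v t p.1.2.1) * v t p.1.2.2‖)
variable (hM : ∀ t, Wsum v t ≤ ENNReal.ofReal M₁)
variable (hM1 : 1 ≤ M₁)

include hM hM1 in
lemma Xi_bound {W : ℕ → ℝ≥0∞} (hWmono : Monotone W)
    (hWsub : ∀ n m, W (n + m) ≤ W n + W m + W n * W m)
    {s : ℝ} {B : ℝ} (hB : 0 ≤ B) (hPhi : Phi v W s ≤ ENNReal.ofReal B) :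
    (∑' k, W k * Dq v s k) ≤ ENNReal.ofReal (2 * B * M₁ ^ 2 + B ^ 2 * M₁) := by
  have h0 : (0:ℝ) ≤ M₁ := by linarith
  refine (weighted_cubic_bound v W hWmono hWsub s).trans ?_
  have hstep : 2 * (Phi v W s * (Wsum v s * Wsum v s)) + Phi v W s * Phi v W s * Wsum v s
      ≤ 2 * (ENNReal.ofReal B * (ENNReal.ofReal M₁ * ENNReal.ofReal M₁))
        + ENNReal.ofReal B * ENNReal.ofReal B * ENNReal.ofReal M₁ := by
    gcongr <;> first | exact hPhi | exact hM s
  refine hstep.trans (le_of_eq ?_)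
  have e2 : (2 : ℝ≥0∞) = ENNReal.ofReal (2:ℝ) := by simp
  rw [e2, ← ENNReal.ofReal_mul h0, ← ENNReal.ofReal_mul hB,
    ← ENNReal.ofReal_mul (by norm_num : (0:ℝ) ≤ 2),
    ← ENNReal.ofReal_mul hB, ← ENNReal.ofReal_mul (by positivity),
    ← ENNReal.ofReal_add (by positivity) (by positivity)]
  congr 1
  ring

include hM hM1 in
lemma Phi_apriori {W : ℕ → ℝ≥0∞} {R : ℝ} (hR0 : 0 ≤ R) (hWR : ∀ k, W k ≤ ENNReal.ofReal R) (s : ℝ) :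
    Phi v W s ≤ ENNReal.ofReal (R * M₁) := by
  have h0 : (0:ℝ) ≤ M₁ := by linarith
  calc Phi v W s ≤ ∑' k, ENNReal.ofReal R * NN v s k :=
        ENNReal.tsum_le_tsum fun k => mul_le_mul_left (hWR k) _
    _ = ENNReal.ofReal R * Wsum v s := ENNReal.tsum_mul_left
    _ ≤ ENNReal.ofReal R * ENNReal.ofReal M₁ := mul_le_mul_right (hM s) _
    _ = ENNReal.ofReal (R * M₁) := (ENNReal.ofReal_mul hR0).symm

include hc1 hder hsum hM hM1 in
/-- The core interval bootstrap lemma with frozen truncated weight. -/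
lemma interval_lemma {C R : ℝ} (hC : 1 ≤ C) (hR : 1 ≤ R)
    {W : ℕ → ℝ≥0∞} (hWmono : Monotone W)
    (hWsub : ∀ n m, W (n + m) ≤ W n + W m + W n * W m)
    (hWR : ∀ k, W k ≤ ENNReal.ofReal R)
    {a len A : ℝ} (hlen : 0 ≤ len) (hA : 0 ≤ A)
    (hAK : A + 15 * C ^ 2 * M₁ ^ 2 * len ≤ 2 * C)
    (hPhia : Phi v W a ≤ ENNReal.ofReal A) :
    ∀ t ∈ Icc a (a + len),
      Phi v W t ≤ ENNReal.ofReal (A + 15 * C ^ 2 * M₁ ^ 2 * (t - a)) := by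
  have h0 : (0:ℝ) ≤ M₁ := by linarith
  set K : ℝ := 15 * C ^ 2 * M₁ ^ 2 with hKdef
  set KB : ℝ := 3 * R ^ 2 * M₁ ^ 3 with hKBdef
  have hKpos : 0 < K := by positivity
  have hKBpos : 0 < KB := by positivity
  have hWtop : ∀ k, W k ≠ ∞ := fun k => ne_top_of_le_ne_top ENNReal.ofReal_ne_top (hWR k)
  -- conditional bound on Xi
  have hXi3C : ∀ s : ℝ, Phi v W s ≤ ENNReal.ofReal (3 * C) →
      (∑' k, W k * Dq v s k) ≤ ENNReal.ofReal K := by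
    intro s hs
    refine (Xi_bound hM hM1 hWmono hWsub (by positivity) hs).trans
      (ENNReal.ofReal_le_ofReal ?_)
    have h1 : C * M₁ ^ 2 ≤ C ^ 2 * M₁ ^ 2 := by nlinarith
    have h2 : C ^ 2 * M₁ ≤ C ^ 2 * M₁ ^ 2 := by nlinarith
    rw [hKdef]
    nlinarith
  -- a priori bound on Xi
  have hXiB : ∀ s : ℝ, (∑' k, W k * Dq v s k) ≤ ENNReal.ofReal KB := by
    intro s
    refine (Xi_bound hM hM1 hWmono hWsub (by positivity)
      (Phi_apriori hM hM1 (by linarith) hWR s)).trans (ENNReal.ofReal_le_ofReal ?_)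
    have h1 : R * M₁ ^ 3 ≤ R ^ 2 * M₁ ^ 3 := by nlinarith
    rw [hKBdef]
    nlinarith
  -- step2: the two-zone integral estimate
  have step2 : ∀ t' t : ℝ, a ≤ t' → t' ≤ t →
      (∀ s, a ≤ s → s < t' → Phi v W s ≤ ENNReal.ofReal (3 * C)) →
      Phi v W t ≤ ENNReal.ofReal (A + K * (t' - a) + KB * (t - t')) := by
    intro t' t hat' ht't hzone
    have hat : a ≤ t := le_trans hat' ht't
    have hsplit : Ioc a t = Ioc a t' ∪ Ioc t' t := (Ioc_union_Ioc_eq_Ioc hat' ht't).symm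
    have hint := Phi_int_ineq hc1 hder hsum hM hM1 W hWtop hat
    have hdisj : Disjoint (Ioc a t') (Ioc t' t) := Ioc_disjoint_Ioc_of_le le_rfl
    have hIunion : ∫⁻ s in Ioc a t, (∑' k, W k * Dq v s k)
        = (∫⁻ s in Ioc a t', (∑' k, W k * Dq v s k))
          + ∫⁻ s in Ioc t' t, (∑' k, W k * Dq v s k) := by
      rw [hsplit, lintegral_union measurableSet_Ioc hdisj]
    have hI1 : (∫⁻ s in Ioc a t', (∑' k, W k * Dq v s k))
        ≤ ENNReal.ofReal K * ENNReal.ofReal (t' - a) := by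
      have hae : ∀ᵐ s ∂(volume.restrict (Ioc a t')),
          (∑' k, W k * Dq v s k) ≤ ENNReal.ofReal K := by
        have hne : ∀ᵐ s : ℝ, s ≠ t' := by
          have h1 : (volume : Measure ℝ) {t'} = 0 := Real.volume_singleton
          exact (MeasureTheory.measure_eq_zero_iff_ae_notMem).mp h1
        filter_upwards [ae_restrict_of_ae hne, ae_restrict_mem measurableSet_Ioc]
          with s hsne hsmem
        exact hXi3C s (hzone s hsmem.1.le (lt_of_le_of_ne hsmem.2 hsne))
      calc (∫⁻ s in Ioc a t', (∑' k, W k * Dq v s k))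
          ≤ ∫⁻ _ in Ioc a t', ENNReal.ofReal K := lintegral_mono_ae hae
        _ = ENNReal.ofReal K * volume (Ioc a t') := by
            rw [setLIntegral_const]
        _ = ENNReal.ofReal K * ENNReal.ofReal (t' - a) := by rw [Real.volume_Ioc]
    have hI2 : (∫⁻ s in Ioc t' t, (∑' k, W k * Dq v s k))
        ≤ ENNReal.ofReal KB * ENNReal.ofReal (t - t') := by
      calc (∫⁻ s in Ioc t' t, (∑' k, W k * Dq v s k))
          ≤ ∫⁻ _ in Ioc t' t, ENNReal.ofReal KB := lintegral_mono fun s => hXiB s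
        _ = ENNReal.ofReal KB * volume (Ioc t' t) := by rw [setLIntegral_const]
        _ = ENNReal.ofReal KB * ENNReal.ofReal (t - t') := by rw [Real.volume_Ioc]
    calc Phi v W t ≤ Phi v W a + ∫⁻ s in Ioc a t, (∑' k, W k * Dq v s k) := hint
      _ ≤ ENNReal.ofReal A + (ENNReal.ofReal K * ENNReal.ofReal (t' - a)
            + ENNReal.ofReal KB * ENNReal.ofReal (t - t')) := by
          rw [hIunion] at *
          exact add_le_add hPhia (add_le_add hI1 hI2)
      _ = ENNReal.ofReal (A + K * (t' - a) + KB * (t - t')) := by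
          have hn1 : (0:ℝ) ≤ K * (t' - a) := mul_nonneg hKpos.le (by linarith)
          have hn2 : (0:ℝ) ≤ KB * (t - t') := mul_nonneg hKBpos.le (by linarith)
          rw [← ENNReal.ofReal_mul hKpos.le, ← ENNReal.ofReal_mul hKBpos.le,
            ← ENNReal.ofReal_add hn1 hn2, ← ENNReal.ofReal_add hA (by linarith)]
          congr 1
          ring
    -- end step2
  -- the bootstrap
  set S : Set ℝ := {h : ℝ | h ∈ Icc 0 len ∧
    ∀ s ∈ Icc a (a + h), Phi v W s ≤ ENNReal.ofReal (3 * C)} with hSdef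
  have h0S : (0:ℝ) ∈ S := by
    constructor
    · exact ⟨le_rfl, hlen⟩
    · intro s hs
      have : s = a := le_antisymm (by simpa using hs.2) hs.1
      subst this
      exact hPhia.trans (ENNReal.ofReal_le_ofReal (by nlinarith))
  have hbdd : BddAbove S := ⟨len, fun h hh => hh.1.2⟩
  set Q : ℝ := sSup S with hQdef
  have hQ0 : 0 ≤ Q := le_csSup hbdd h0S
  have hQlen : Q ≤ len := csSup_le ⟨0, h0S⟩ fun h hh => hh.1.2
  have hQico : ∀ s, a ≤ s → s < a + Q → Phi v W s ≤ ENNReal.ofReal (3 * C) := by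
    intro s hs1 hs2
    obtain ⟨h, hhS, hlt⟩ := exists_lt_of_lt_csSup ⟨0, h0S⟩ (by linarith : s - a < Q)
    exact hhS.2 s ⟨hs1, by linarith⟩
  have hQS : ∀ s ∈ Icc a (a + Q), Phi v W s ≤ ENNReal.ofReal (3 * C) := by
    intro s hs
    rcases lt_or_eq_of_le hs.2 with hlt | heq
    · exact hQico s hs.1 hlt
    · subst heq
      refine (step2 (a + Q) (a + Q) (by linarith) le_rfl hQico).trans
        (ENNReal.ofReal_le_ofReal ?_)
      have : K * (a + Q - a) ≤ K * len := by
        apply mul_le_mul_of_nonneg_left _ hKpos.le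
        linarith
      nlinarith
  have hQeq : Q = len := by
    by_contra hne
    have hQlt : Q < len := lt_of_le_of_ne hQlen hne
    set η : ℝ := min (len - Q) (C / KB) with hηdef
    have hηpos : 0 < η := lt_min (by linarith) (div_pos (by linarith) hKBpos)
    have hmem : Q + η ∈ S := by
      constructor
      · constructor
        · linarith
        · have := min_le_left (len - Q) (C / KB)
          have : η ≤ len - Q := this
          linarith
      · intro s hs
        rcases le_or_gt s (a + Q) with hle | hgt
        · exact hQS s ⟨hs.1, hle⟩
        · refine (step2 (a + Q) s (by linarith) hgt.le hQico).trans
            (ENNReal.ofReal_le_ofReal ?_)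
          have h1 : K * (a + Q - a) ≤ K * len :=
            mul_le_mul_of_nonneg_left (by linarith) hKpos.le
          have h2 : KB * (s - (a + Q)) ≤ KB * η := by
            apply mul_le_mul_of_nonneg_left _ hKBpos.le
            have := hs.2
            linarith
          have h3 : KB * η ≤ C := by
            have : η ≤ C / KB := min_le_right _ _
            calc KB * η ≤ KB * (C / KB) := mul_le_mul_of_nonneg_left this hKBpos.le
              _ = C := by field_simp
          nlinarith
    have : Q + η ≤ Q := le_csSup hbdd hmem
    linarith
  -- conclusion
  intro t ht
  have hzone : ∀ s, a ≤ s → s < t → Phi v W s ≤ ENNReal.ofReal (3 * C) := by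
    intro s hs1 hs2
    apply hQS
    constructor
    · exact hs1
    · rw [hQeq]
      have := ht.2
      linarith
  have := step2 t t ht.1 le_rfl hzone
  refine this.trans (le_of_eq ?_)
  congr 1
  ring

end interval

section master

variable {v : ℝ → ℕ → ℂ} {c : ℂ} {M₁ : ℝ}
variable (hc1 : ‖c‖ = 1)
variable (hder : ∀ t k, HasDerivAt (fun s => v s k) (c * szegoCubic v t k) t)
variable (hsum : ∀ t k, Summable fun p : {p : ℕ × ℕ × ℕ // p.1 + p.2.2 = p.2.1 + k} =>
  ‖v t p.1.1 * (starRingEnd ℂ) (v t p.1.2.1) * v t p.1.2.2‖)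
variable (hM : ∀ t, Wsum v t ≤ ENNReal.ofReal M₁)
variable (hM1 : 1 ≤ M₁)

lemma Phi_mono_W {t : ℝ} {W1 W2 : ℕ → ℝ≥0∞} (h : ∀ k, W1 k ≤ W2 k) :
    Phi v W1 t ≤ Phi v W2 t :=
  ENNReal.tsum_le_tsum fun k => mul_le_mul_left (h k) _

lemma Phi_le_of_trunc {b : ℝ} {t : ℝ} {L : ℝ≥0∞}
    (h : ∀ R : ℕ, 1 ≤ R → Phi v (fun k => min (wt b k) (ENNReal.ofReal (R:ℝ))) t ≤ L) :
    Phi v (wt b) t ≤ L := by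
  rw [Phi, ENNReal.tsum_eq_iSup_sum]
  apply iSup_le
  intro s
  set r : ℝ := ∑ k ∈ s, Real.exp (b * k) with hr
  set R : ℕ := ⌈r⌉₊ + 1 with hRdef
  have hR1 : 1 ≤ R := Nat.succ_le_succ (Nat.zero_le _)
  have hbound : ∀ k ∈ s, wt b k ≤ ENNReal.ofReal (R:ℝ) := by
    intro k hk
    apply ENNReal.ofReal_le_ofReal
    have h1 : Real.exp (b * k) ≤ r :=
      Finset.single_le_sum (f := fun i : ℕ => Real.exp (b * i))
        (fun i _ => (Real.exp_pos _).le) hk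
    have h2 : r ≤ (⌈r⌉₊ : ℝ) := Nat.le_ceil r
    rw [hRdef]
    push_cast
    linarith
  calc ∑ k ∈ s, wt b k * NN v t k
      ≤ ∑ k ∈ s, min (wt b k) (ENNReal.ofReal (R:ℝ)) * NN v t k :=
        Finset.sum_le_sum fun k hk => mul_le_mul_left (le_min le_rfl (hbound k hk)) _
    _ ≤ Phi v (fun k => min (wt b k) (ENNReal.ofReal (R:ℝ))) t := ENNReal.sum_le_tsum s
    _ ≤ L := h R hR1

include hc1 hder hsum hM hM1 in
lemma frozen_run {C : ℝ} (hC : 1 ≤ C) {b' : ℝ} (hb' : 0 < b')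
    {aT len A : ℝ} (hlen : 0 ≤ len) (hA : 0 ≤ A)
    (hAK : A + 15 * C ^ 2 * M₁ ^ 2 * len ≤ 2 * C)
    (hPhia : Phi v (wt b') aT ≤ ENNReal.ofReal A) :
    ∀ t ∈ Icc aT (aT + len), Phi v (wt b') t ≤ ENNReal.ofReal (2 * C) := by
  intro t ht
  apply Phi_le_of_trunc
  intro R hR1
  have hWmono : Monotone (fun k => min (wt b' k) (ENNReal.ofReal (R:ℝ))) :=
    fun x y h => min_le_min (wt_mono_k hb'.le h) le_rfl
  have hWsub : ∀ n m, min (wt b' (n + m)) (ENNReal.ofReal (R:ℝ))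
      ≤ min (wt b' n) (ENNReal.ofReal (R:ℝ)) + min (wt b' m) (ENNReal.ofReal (R:ℝ))
        + min (wt b' n) (ENNReal.ofReal (R:ℝ)) * min (wt b' m) (ENNReal.ofReal (R:ℝ)) :=
    fun n m => trunc_sub (le_of_eq (wt_sub hb'.le n m))
  have hWR : ∀ k, min (wt b' k) (ENNReal.ofReal (R:ℝ)) ≤ ENNReal.ofReal (R:ℝ) :=
    fun k => min_le_right _ _
  have hPhiaW : Phi v (fun k => min (wt b' k) (ENNReal.ofReal (R:ℝ))) aT ≤ ENNReal.ofReal A :=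
    le_trans (Phi_mono_W (fun k => min_le_left _ _)) hPhia
  have hfin := interval_lemma hc1 hder hsum hM hM1 hC (by exact_mod_cast hR1)
    hWmono hWsub hWR hlen hA hAK hPhiaW t ht
  refine hfin.trans (ENNReal.ofReal_le_ofReal ?_)
  have h1 : 15 * C ^ 2 * M₁ ^ 2 * (t - aT) ≤ 15 * C ^ 2 * M₁ ^ 2 * len := by
    have := ht.1; have := ht.2
    apply mul_le_mul_of_nonneg_left _ (by positivity)
    linarith
  linarith

lemma contract {θ bb tt X : ℝ} (hθ0 : 0 ≤ θ) (hθ1 : θ ≤ 1) (hX : 0 ≤ X) (hbb : 0 ≤ bb)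
    (h : Phi v (wt bb) tt ≤ ENNReal.ofReal X) :
    Phi v (wt (θ * bb)) tt ≤ ENNReal.ofReal (θ * X) := by
  have h1 : Phi v (wt (θ * bb)) tt ≤ ∑' k, ENNReal.ofReal θ * (wt bb k * NN v tt k) := by
    apply ENNReal.tsum_le_tsum
    intro k
    rw [← mul_assoc]
    exact mul_le_mul_left (wt_contract hbb hθ0 hθ1 k) _
  rw [ENNReal.tsum_mul_left] at h1
  calc Phi v (wt (θ * bb)) tt ≤ ENNReal.ofReal θ * Phi v (wt bb) tt := h1
    _ ≤ ENNReal.ofReal θ * ENNReal.ofReal X := mul_le_mul_right h _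
    _ = ENNReal.ofReal (θ * X) := (ENNReal.ofReal_mul hθ0).symm

include hc1 hder hsum hM hM1 in
set_option maxHeartbeats 1000000 in
lemma master {C σ : ℝ} (hC : 1 ≤ C) (hσ : 0 < σ)
    (hPhi0 : Phi v (wt σ) 0 ≤ ENNReal.ofReal C) :
    ∀ t : ℝ, 0 ≤ t → ∀ b : ℝ, 0 ≤ b → b ≤ σ * Real.exp (-(30 * C * M₁ ^ 2) * t) →
      Phi v (wt b) t ≤ ENNReal.ofReal (2 * C) := by
  have hM0 : (0:ℝ) ≤ M₁ := by linarith
  have hC0 : (0:ℝ) < C := by linarith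
  set K : ℝ := 15 * C ^ 2 * M₁ ^ 2 with hK
  have hKpos : 0 < K := by positivity
  set δ : ℝ := C / K with hδdef
  have hδpos : 0 < δ := by positivity
  set lam : ℝ := K / C with hlamdef
  have hlampos : 0 < lam := by positivity
  have hlamδ : lam * δ = 1 := by
    rw [hlamdef, hδdef]; field_simp
  have hKδ : K * δ = C := by
    rw [hδdef]; field_simp
  have hlam_eq : 2 * lam = 30 * C * M₁ ^ 2 := by
    rw [hlamdef, hK]; field_simp; ring
  have h2e : (2:ℝ) ≤ Real.exp 1 := by
    have := Real.add_one_le_exp 1; linarith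
  have hexph : Real.exp (-1 : ℝ) ≤ 1/2 := by
    rw [Real.exp_neg]
    rw [inv_le_comm₀ (Real.exp_pos 1) (by norm_num)]
    simpa using h2e
  set bseq : ℕ → ℝ := fun n => σ * Real.exp (-lam * (n * δ)) with hbseq
  have hbseqpos : ∀ n, 0 < bseq n := fun n => by positivity
  -- the induction step
  have step : ∀ n : ℕ, Phi v (wt (bseq n)) ((n:ℝ) * δ) ≤ ENNReal.ofReal (2 * C) →
      ∀ t ∈ Icc ((n:ℝ) * δ) ((n:ℝ) * δ + δ),
        Phi v (wt (bseq (n+1))) t ≤ ENNReal.ofReal (2 * C) := by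
    intro n hn
    have hrec : bseq (n+1) = Real.exp (-1 : ℝ) * bseq n := by
      rw [hbseq]
      have e1 : -lam * ((((n:ℕ)+1 : ℕ) : ℝ) * δ) = -1 + -lam * ((n:ℝ) * δ) := by
        push_cast
        linear_combination -hlamδ
      simp only [e1, Real.exp_add]
      ring
    have hcontr := contract (v := v) (Real.exp_pos (-1:ℝ)).le
      (Real.exp_le_one_iff.mpr (by norm_num)) (by positivity) (hbseqpos n).le hn
    rw [← hrec] at hcontr
    have hAK : Real.exp (-1:ℝ) * (2 * C) + 15 * C ^ 2 * M₁ ^ 2 * δ ≤ 2 * C := by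
      have : 15 * C ^ 2 * M₁ ^ 2 * δ = C := by rw [← hK]; exact hKδ
      rw [this]
      nlinarith
    exact frozen_run hc1 hder hsum hM hM1 hC (hbseqpos (n+1)) hδpos.le
      (by positivity) hAK hcontr
  -- the chain
  have key : ∀ n : ℕ, Phi v (wt (bseq n)) ((n:ℝ) * δ) ≤ ENNReal.ofReal (2 * C) := by
    intro n
    induction n with
    | zero =>
      have h0 : bseq 0 = σ := by
        rw [hbseq]; simp
      rw [h0]
      simp only [Nat.cast_zero, zero_mul]
      exact hPhi0.trans (ENNReal.ofReal_le_ofReal (by linarith))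
    | succ n ih =>
      have := step n ih (((n:ℝ)+1) * δ) ⟨by nlinarith [hδpos.le], by nlinarith⟩
      convert this using 3 <;> push_cast <;> ring
  -- conclusion
  intro t ht b hb0 hble
  rcases eq_or_lt_of_le ht with h0 | htpos
  · -- t = 0
    have ht0 : t = 0 := h0.symm
    subst ht0
    have hbσ : b ≤ σ := by
      have : Real.exp (-(30 * C * M₁ ^ 2) * 0) = 1 := by simp
      rw [this, mul_one] at hble
      exact hble
    calc Phi v (wt b) 0 ≤ Phi v (wt σ) 0 := Phi_mono_W fun k => wt_mono_b hbσ k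
      _ ≤ ENNReal.ofReal C := hPhi0
      _ ≤ ENNReal.ofReal (2 * C) := ENNReal.ofReal_le_ofReal (by linarith)
  · rcases le_or_gt t δ with hle | hgt
    · -- one-shot on [0, t]
      set θ : ℝ := Real.exp (-lam * t) with hθ
      have hθ0 : 0 ≤ θ := (Real.exp_pos _).le
      have hθ1 : θ ≤ 1 := Real.exp_le_one_iff.mpr (by nlinarith)
      have hcontr := contract (v := v) hθ0 hθ1 hC0.le hσ.le hPhi0
      have hAK : θ * C + 15 * C ^ 2 * M₁ ^ 2 * t ≤ 2 * C := by
        have h1 : 15 * C ^ 2 * M₁ ^ 2 * t ≤ 15 * C ^ 2 * M₁ ^ 2 * δ := by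
          apply mul_le_mul_of_nonneg_left hle (by positivity)
        have h2 : 15 * C ^ 2 * M₁ ^ 2 * δ = C := by rw [← hK]; exact hKδ
        nlinarith
      have hrun := frozen_run hc1 hder hsum hM hM1 hC (by positivity : 0 < θ * σ)
        htpos.le (by positivity) hAK hcontr t ⟨htpos.le, by linarith⟩
      have hbθσ : b ≤ θ * σ := by
        refine hble.trans ?_
        rw [hθ, mul_comm θ σ]
        apply mul_le_mul_of_nonneg_left _ hσ.le
        apply Real.exp_le_exp.mpr
        nlinarith [hlam_eq]
      calc Phi v (wt b) t ≤ Phi v (wt (θ * σ)) t := Phi_mono_W fun k => wt_mono_b hbθσ k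
        _ ≤ ENNReal.ofReal (2 * C) := hrun
    · -- chain case
      set n : ℕ := ⌊t / δ⌋₊ with hn
      have hn1 : 1 ≤ (n:ℝ) := by
        have : (1:ℕ) ≤ n := Nat.le_floor (by rw [le_div_iff₀ hδpos]; push_cast; linarith)
        exact_mod_cast this
      have hlow : (n:ℝ) * δ ≤ t := by
        have h1 : (n:ℝ) ≤ t / δ := Nat.floor_le (by positivity)
        rw [← le_div_iff₀ hδpos]
        exact h1
      have hup : t ≤ (n:ℝ) * δ + δ := by
        have h1 : t / δ < (n:ℝ) + 1 := Nat.lt_floor_add_one _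
        rw [div_lt_iff₀ hδpos] at h1
        nlinarith
      have hkey := step n (key n) t ⟨hlow, hup⟩
      have hbb : b ≤ bseq (n+1) := by
        refine hble.trans ?_
        rw [hbseq]
        apply mul_le_mul_of_nonneg_left _ hσ.le
        apply Real.exp_le_exp.mpr
        have hδt : δ ≤ t := hgt.le
        have : ((n:ℝ)+1) * δ ≤ 2 * t := by nlinarith
        push_cast
        nlinarith [hlam_eq, hlampos.le]
      calc Phi v (wt b) t ≤ Phi v (wt (bseq (n+1))) t := Phi_mono_W fun k => wt_mono_b hbb k
        _ ≤ ENNReal.ofReal (2 * C) := hkey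

end master

lemma final_conv {u : ℝ → ℕ → ℂ} {t b M₁ C2 : ℝ} (hb : 0 ≤ b) (hM₁0 : 0 ≤ M₁) (hC2 : 0 ≤ C2)
    (hWs : Summable fun k : ℕ => ‖u t k‖)
    (hWsum : Wsum u t ≤ ENNReal.ofReal M₁)
    (hPhi : Phi u (wt b) t ≤ ENNReal.ofReal C2) :
    (Summable fun k : ℕ => Real.exp (b * k) * ‖u t k‖) ∧
      (∑' k : ℕ, Real.exp (b * k) * ‖u t k‖) ≤ M₁ + C2 := by
  have key : ∀ N : ℕ, ∑ k ∈ Finset.range N, Real.exp (b * k) * ‖u t k‖ ≤ M₁ + C2 := by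
    intro N
    rw [← ENNReal.ofReal_le_ofReal_iff (by positivity)]
    calc ENNReal.ofReal (∑ k ∈ Finset.range N, Real.exp (b * k) * ‖u t k‖)
        = ∑ k ∈ Finset.range N, ENNReal.ofReal (Real.exp (b * k) * ‖u t k‖) :=
          ENNReal.ofReal_sum_of_nonneg (fun k _ => by positivity)
      _ = ∑ k ∈ Finset.range N, (1 + wt b k) * NN u t k := by
          apply Finset.sum_congr rfl
          intro k _
          rw [ENNReal.ofReal_mul (Real.exp_pos _).le, ofReal_norm, enorm_eq_nnnorm]
          congr 1
          have h1 : Real.exp (b * k) = 1 + (Real.exp (b * k) - 1) := by ring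
          rw [h1, ENNReal.ofReal_add (by norm_num) (by linarith [one_le_exp_nat hb k])]
          simp [wt]
      _ = (∑ k ∈ Finset.range N, NN u t k) + ∑ k ∈ Finset.range N, wt b k * NN u t k := by
          simp_rw [add_mul, one_mul]
          exact Finset.sum_add_distrib
      _ ≤ Wsum u t + Phi u (wt b) t :=
          add_le_add (ENNReal.sum_le_tsum _) (ENNReal.sum_le_tsum _)
      _ ≤ ENNReal.ofReal M₁ + ENNReal.ofReal C2 := add_le_add hWsum hPhi
      _ = ENNReal.ofReal (M₁ + C2) := (ENNReal.ofReal_add hM₁0 hC2).symm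
  exact ⟨summable_of_sum_range_le (fun k => by positivity) key,
    Real.tsum_le_of_sum_range_le (fun k => by positivity) key⟩

end SzegoAux

open SzegoAux

/-- If `u` is a Fourier-side solution of the cubic Szegő equation with
uniformly bounded Wiener norm `‖u(t)‖_W ≤ M` and analytic initial datum,
`‖u(0)‖_{G_σ(W)} < ∞`, then there are `λ > 0` and `C₀ > 0` such that for all `t`,
`‖u(t)‖_{G_{τ(t)}(W)} ≤ C₀` where `τ(t) = σ e^{-λ|t|}`. -/
theorem szego_gevrey_persistence (σ : ℝ) (hσ : 0 < σ) (u : ℝ → ℕ → ℂ)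
    (hu : IsSzegoSolution u) (M : ℝ)
    (hW : ∀ t : ℝ, Summable fun k : ℕ => ‖u t k‖)
    (hM : ∀ t : ℝ, (∑' k : ℕ, ‖u t k‖) ≤ M)
    (hG : Summable fun k : ℕ => Real.exp (σ * k) * ‖u 0 k‖) :
    ∃ lam C₀ : ℝ, 0 < lam ∧ 0 < C₀ ∧ ∀ t : ℝ,
      (Summable fun k : ℕ => Real.exp (σ * Real.exp (-lam * |t|) * k) * ‖u t k‖) ∧
      (∑' k : ℕ, Real.exp (σ * Real.exp (-lam * |t|) * k) * ‖u t k‖) ≤ C₀ := by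
  classical
  set M₁ : ℝ := M + 1 with hM₁def
  have hM0 : 0 ≤ M := le_trans (tsum_nonneg fun k => norm_nonneg _) (hM 0)
  have hM₁1 : 1 ≤ M₁ := by rw [hM₁def]; linarith
  have hWsum : ∀ t, Wsum u t ≤ ENNReal.ofReal M₁ := by
    intro t
    have h1 : Wsum u t = ENNReal.ofReal (∑' k, ‖u t k‖) := by
      rw [ENNReal.ofReal_tsum_of_nonneg (fun k => norm_nonneg _) (hW t)]
      apply tsum_congr
      intro k
      rw [ofReal_norm, enorm_eq_nnnorm]
      rfl
    rw [h1]
    exact ENNReal.ofReal_le_ofReal (by linarith [hM t])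
  set Cc : ℝ := (∑' k : ℕ, Real.exp (σ * k) * ‖u 0 k‖) + 1 with hCcdef
  have htsnn : 0 ≤ ∑' k : ℕ, Real.exp (σ * k) * ‖u 0 k‖ :=
    tsum_nonneg fun k => by positivity
  have hCc1 : 1 ≤ Cc := by rw [hCcdef]; linarith
  have hPhi0 : Phi u (wt σ) 0 ≤ ENNReal.ofReal Cc := by
    calc Phi u (wt σ) 0
        ≤ ∑' k : ℕ, ENNReal.ofReal (Real.exp (σ * k) * ‖u 0 k‖) := by
          apply ENNReal.tsum_le_tsum
          intro k
          calc wt σ k * NN u 0 k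
              = ENNReal.ofReal ((Real.exp (σ * k) - 1) * ‖u 0 k‖) := by
                rw [ENNReal.ofReal_mul (by linarith [one_le_exp_nat hσ.le k])]
                rw [ofReal_norm, enorm_eq_nnnorm]
                rfl
            _ ≤ ENNReal.ofReal (Real.exp (σ * k) * ‖u 0 k‖) := by
                apply ENNReal.ofReal_le_ofReal
                have := norm_nonneg (u 0 k)
                nlinarith [one_le_exp_nat hσ.le k]
      _ = ENNReal.ofReal (∑' k : ℕ, Real.exp (σ * k) * ‖u 0 k‖) :=
          (ENNReal.ofReal_tsum_of_nonneg (fun k => by positivity) hG).symm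
      _ ≤ ENNReal.ofReal Cc := ENNReal.ofReal_le_ofReal (by rw [hCcdef]; linarith)
  have hmaster_u := master (v := u) (c := -Complex.I) (by simp)
    (fun t k => (hu t k).2) (fun t k => (hu t k).1) hWsum hM₁1 hCc1 hσ hPhi0
  -- time-reversed solution
  set v : ℝ → ℕ → ℂ := fun s k => u (-s) k with hvdef
  have hsumv : ∀ t k, Summable fun p : {p : ℕ × ℕ × ℕ // p.1 + p.2.2 = p.2.1 + k} =>
      ‖v t p.1.1 * (starRingEnd ℂ) (v t p.1.2.1) * v t p.1.2.2‖ :=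
    fun t k => (hu (-t) k).1
  have hderv : ∀ t k, HasDerivAt (fun s => v s k) (Complex.I * szegoCubic v t k) t := by
    intro t k
    have h := (hu (-t) k).2
    have h2 := h.scomp t (hasDerivAt_neg t)
    have hsc : szegoCubic v t k = szegoCubic u (-t) k := rfl
    have h3 : (-1 : ℝ) • (-Complex.I * szegoCubic u (-t) k) = Complex.I * szegoCubic v t k := by
      rw [hsc, neg_one_smul]
      ring
    rw [← h3]; exact h2
  have hWsumv : ∀ t, Wsum v t ≤ ENNReal.ofReal M₁ := fun t => hWsum (-t)
  have hPhi0v : Phi v (wt σ) 0 ≤ ENNReal.ofReal Cc := by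
    have heq : Phi v (wt σ) 0 = Phi u (wt σ) 0 := by
      simp [Phi, NN, hvdef]
    rw [heq]
    exact hPhi0
  have hmaster_v := master (v := v) (c := Complex.I) (by simp)
    hderv hsumv hWsumv hM₁1 hCc1 hσ hPhi0v
  refine ⟨30 * Cc * M₁ ^ 2, M₁ + 2 * Cc, by positivity, by positivity, ?_⟩
  intro t
  have hb0 : 0 ≤ σ * Real.exp (-(30 * Cc * M₁ ^ 2) * |t|) := by positivity
  have hPhib : Phi u (wt (σ * Real.exp (-(30 * Cc * M₁ ^ 2) * |t|))) t
      ≤ ENNReal.ofReal (2 * Cc) := by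
    rcases le_or_gt 0 t with h | h
    · have habs : |t| = t := abs_of_nonneg h
      rw [habs]
      exact hmaster_u t h _ (by positivity) le_rfl
    · have habs : |t| = -t := abs_of_neg h
      rw [habs]
      have hres := hmaster_v (-t) (by linarith) _ (by positivity)
        (le_rfl : σ * Real.exp (-(30 * Cc * M₁ ^ 2) * (-t))
          ≤ σ * Real.exp (-(30 * Cc * M₁ ^ 2) * (-t)))
      have heq : Phi v (wt (σ * Real.exp (-(30 * Cc * M₁ ^ 2) * (-t)))) (-t)
          = Phi u (wt (σ * Real.exp (-(30 * Cc * M₁ ^ 2) * (-t)))) t := by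
        simp [Phi, NN, hvdef]
      rwa [heq] at hres
  exact final_conv hb0 (by linarith) (by linarith) (hW t) (hWsum t) hPhib
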